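/- Let Z be standard normal, X_z = (Z - z conditioned on Z > z), and m(z) = E[X_z]. There exist universal constants C, c > 0 such that P(X_z > k·m(z)) ≤ C·e^{-ck} for all z ∈ ℝ and all positive integers k. -/

import Mathlib

open MeasureTheory Set Filter

/-- The density on `(0,∞)` of `X_z = (Z - z | Z > z)` for a standard normal `Z`. -/
noncomputable def condDens (z x : ℝ) : ℝ :=
  Real.exp (-(x + z) ^ 2 / 2) / (∫ t in Set.Ioi z, Real.exp (-t ^ 2 / 2))

/-- The conditional mean overshoot `m z = E[X_z]`. -/
noncomputable def condMean (z : ℝ) : ℝ :=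
  Real.exp (-z ^ 2 / 2) / (∫ t in Set.Ioi z, Real.exp (-t ^ 2 / 2)) - z

/-- The (unnormalized) Gaussian tail `∫_a^∞ e^{-t²/2} dt`. -/
noncomputable def GT (a : ℝ) : ℝ := ∫ t in Set.Ioi a, Real.exp (-t ^ 2 / 2)

/-- The (unnormalized) total Gaussian mass. -/
noncomputable def TT : ℝ := ∫ t : ℝ, Real.exp (-t ^ 2 / 2)

lemma gauss_eq : (fun t : ℝ => Real.exp (-t ^ 2 / 2)) = fun t => Real.exp (-(1/2 : ℝ) * t ^ 2) := by
  funext t; congr 1; ring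

lemma int_g : Integrable (fun t : ℝ => Real.exp (-t ^ 2 / 2)) := by
  rw [gauss_eq]; exact integrable_exp_neg_mul_sq (by norm_num)

lemma int_tg : Integrable (fun t : ℝ => t * Real.exp (-t ^ 2 / 2)) := by
  have h := integrable_mul_exp_neg_mul_sq (b := (1/2 : ℝ)) (by norm_num)
  have h2 : (fun t : ℝ => t * Real.exp (-t ^ 2 / 2)) = fun t => t * Real.exp (-(1/2 : ℝ) * t ^ 2) := by
    funext t; congr 2; ring
  rw [h2]; exact h

lemma GT_pos (a : ℝ) : 0 < GT a := by
  rw [GT]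
  rw [setIntegral_pos_iff_support_of_nonneg_ae
    (Eventually.of_forall fun t => (Real.exp_pos _).le) int_g.integrableOn]
  have h : Function.support (fun t : ℝ => Real.exp (-t ^ 2 / 2)) = Set.univ := by
    ext t; simp [Function.mem_support, (Real.exp_pos _).ne']
  rw [h, Set.univ_inter]
  simp [Real.volume_Ioi]

lemma GT_anti {a b : ℝ} (h : a ≤ b) : GT b ≤ GT a :=
  setIntegral_mono_set int_g.integrableOn
    (Eventually.of_forall fun t => (Real.exp_pos _).le)
    (HasSubset.Subset.eventuallyLE (Set.Ioi_subset_Ioi h))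

lemma GT_shift (a z : ℝ) : ∫ s in Set.Ioi a, Real.exp (-(s + z) ^ 2 / 2) = GT (a + z) := by
  rw [GT]
  have h := (measurePreserving_add_right (volume : Measure ℝ) z).setIntegral_preimage_emb
    (measurableEmbedding_addRight z) (fun t => Real.exp (-t ^ 2 / 2)) (Set.Ioi (a + z))
  have hpre : (· + z) ⁻¹' Set.Ioi (a + z) = Set.Ioi a := by
    ext x; simp [Set.mem_Ioi]
  rw [hpre] at h
  exact h

lemma tendsto_g_zero : Tendsto (fun t : ℝ => Real.exp (-t ^ 2 / 2)) atTop (nhds 0) := by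
  apply Real.tendsto_exp_atBot.comp
  apply Tendsto.atBot_div_const (by norm_num : (0:ℝ) < 2)
  exact tendsto_neg_atBot_iff.mpr (tendsto_pow_atTop two_ne_zero)

lemma int_tg_Ioi (a : ℝ) : ∫ t in Set.Ioi a, t * Real.exp (-t ^ 2 / 2) = Real.exp (-a ^ 2 / 2) := by
  have hderiv : ∀ x ∈ Set.Ici a, HasDerivAt (fun t : ℝ => -Real.exp (-t ^ 2 / 2))
      (x * Real.exp (-x ^ 2 / 2)) x := by
    intro x _
    have h1 : HasDerivAt (fun t : ℝ => -t ^ 2 / 2) (-x) x := by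
      have h := ((hasDerivAt_pow 2 x).neg).div_const 2
      refine h.congr_deriv ?_
      ring
    have h2 := (h1.exp).neg
    refine h2.congr_deriv ?_
    ring
  have h := integral_Ioi_of_hasDerivAt_of_tendsto' hderiv int_tg.integrableOn tendsto_g_zero.neg
  rw [h]; simp

/-- `A a = ∫_a^∞ (t-a) e^{-t²/2} dt`, the unnormalized mean overshoot. -/
noncomputable def AA (a : ℝ) : ℝ := Real.exp (-a ^ 2 / 2) - a * GT a

lemma int_sub_g (a : ℝ) : IntegrableOn (fun t : ℝ => (t - a) * Real.exp (-t ^ 2 / 2)) (Set.Ioi a) := by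
  have h : (fun t : ℝ => (t - a) * Real.exp (-t ^ 2 / 2))
      = fun t => t * Real.exp (-t ^ 2 / 2) - a * Real.exp (-t ^ 2 / 2) := by
    funext t; ring
  rw [h]
  exact (int_tg.sub (int_g.const_mul a)).integrableOn

lemma AA_eq (a : ℝ) : AA a = ∫ t in Set.Ioi a, (t - a) * Real.exp (-t ^ 2 / 2) := by
  have h : ∀ t : ℝ, (t - a) * Real.exp (-t ^ 2 / 2)
      = t * Real.exp (-t ^ 2 / 2) - a * Real.exp (-t ^ 2 / 2) := fun t => by ring
  simp_rw [h]
  rw [integral_sub int_tg.integrableOn (int_g.integrableOn.const_mul a), int_tg_Ioi,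
    integral_const_mul]
  rfl

lemma AA_pos (a : ℝ) : 0 < AA a := by
  rw [AA_eq]
  rw [setIntegral_pos_iff_support_of_nonneg_ae ?hn (int_sub_g a)]
  · have hsub : Set.Ioi a \ {a} ⊆ Function.support (fun t : ℝ => (t - a) * Real.exp (-t ^ 2 / 2)) ∩ Set.Ioi a := by
      intro t ht
      rcases ht with ⟨ht1, _⟩
      refine ⟨?_, ht1⟩
      have h : t - a ≠ 0 := sub_ne_zero.mpr (ne_of_gt ht1)
      simp [Function.mem_support, h, (Real.exp_pos _).ne']
    refine lt_of_lt_of_le ?_ (measure_mono hsub)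
    rw [measure_diff_null (measure_singleton a)]
    simp [Real.volume_Ioi]
  case hn =>
    rw [EventuallyLE, ae_restrict_iff' measurableSet_Ioi]
    refine Eventually.of_forall fun t ht => ?_
    have h : (0:ℝ) ≤ t - a := le_of_lt (sub_pos.mpr ht)
    positivity

lemma AA_mono {z : ℝ} (hz : z ≤ 2) : AA 2 ≤ AA z := by
  rw [AA_eq, AA_eq]
  calc ∫ t in Set.Ioi (2:ℝ), (t - 2) * Real.exp (-t ^ 2 / 2)
      ≤ ∫ t in Set.Ioi (2:ℝ), (t - z) * Real.exp (-t ^ 2 / 2) := by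
        apply setIntegral_mono_on (int_sub_g 2) ?_ measurableSet_Ioi
        · intro t ht
          have h : t - 2 ≤ t - z := by linarith
          exact mul_le_mul_of_nonneg_right h (Real.exp_pos _).le
        · exact (int_sub_g z).mono_set (Set.Ioi_subset_Ioi hz)
    _ ≤ ∫ t in Set.Ioi z, (t - z) * Real.exp (-t ^ 2 / 2) := by
        apply setIntegral_mono_set (int_sub_g z)
        · rw [EventuallyLE, ae_restrict_iff' measurableSet_Ioi]
          refine Eventually.of_forall fun t ht => ?_
          have h : (0:ℝ) ≤ t - z := le_of_lt (sub_pos.mpr ht)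
          positivity
        · exact HasSubset.Subset.eventuallyLE (Set.Ioi_subset_Ioi hz)

lemma mills {a : ℝ} (ha : 0 < a) : a * GT a ≤ Real.exp (-a ^ 2 / 2) := by
  rw [GT, ← integral_const_mul, ← int_tg_Ioi a]
  apply setIntegral_mono_on (int_g.integrableOn.const_mul a) int_tg.integrableOn measurableSet_Ioi
  intro t ht
  exact mul_le_mul_of_nonneg_right (Set.mem_Ioi.mp ht).le (Real.exp_pos _).le

lemma GT_le_TT (a : ℝ) : GT a ≤ TT :=
  setIntegral_le_integral int_g (Eventually.of_forall fun _ => (Real.exp_pos _).le)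

lemma TT_pos : 0 < TT := lt_of_lt_of_le (GT_pos 0) (GT_le_TT 0)

lemma GT_decay {a : ℝ} (ha : 0 ≤ a) : GT a ≤ TT * Real.exp (-a ^ 2 / 2) := by
  have h0 : GT a = ∫ s in Set.Ioi (0:ℝ), Real.exp (-(s + a) ^ 2 / 2) := by
    rw [GT_shift 0 a, zero_add]
  rw [h0]
  have hle : ∀ s ∈ Set.Ioi (0:ℝ), Real.exp (-(s + a) ^ 2 / 2)
      ≤ Real.exp (-a ^ 2 / 2) * Real.exp (-s ^ 2 / 2) := by
    intro s hs
    rw [← Real.exp_add]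
    apply Real.exp_le_exp.mpr
    have hs' : 0 ≤ s := le_of_lt hs
    nlinarith [mul_nonneg hs' ha]
  calc ∫ s in Set.Ioi (0:ℝ), Real.exp (-(s + a) ^ 2 / 2)
      ≤ ∫ s in Set.Ioi (0:ℝ), Real.exp (-a ^ 2 / 2) * Real.exp (-s ^ 2 / 2) := by
        apply setIntegral_mono_on ?_ ((int_g.const_mul _).integrableOn) measurableSet_Ioi hle
        · have h : Integrable (fun s : ℝ => Real.exp (-(s + a) ^ 2 / 2)) := by
            have h2 := int_g.comp_add_right a
            simpa using h2
          exact h.integrableOn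
    _ = Real.exp (-a ^ 2 / 2) * GT 0 := by rw [integral_const_mul]; rfl
    _ ≤ Real.exp (-a ^ 2 / 2) * TT :=
        mul_le_mul_of_nonneg_left (GT_le_TT 0) (Real.exp_pos _).le
    _ = TT * Real.exp (-a ^ 2 / 2) := by ring

lemma exp_cube {x : ℝ} (hx : 0 ≤ x) : Real.exp (-x) ≤ 1 - x + x ^ 2 / 2 := by
  have h3 : 1 + x + x ^ 2 / 2 + x ^ 3 / 6 ≤ Real.exp x := by
    have h := Real.sum_le_exp_of_nonneg hx 4
    rw [Finset.sum_range_succ, Finset.sum_range_succ, Finset.sum_range_succ,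
      Finset.sum_range_succ] at h
    norm_num [Nat.factorial] at h
    nlinarith [h]
  have hp : (0:ℝ) < 1 + x + x ^ 2 / 2 + x ^ 3 / 6 := by positivity
  have hq : (0:ℝ) < 1 - x + x ^ 2 / 2 := by nlinarith [sq_nonneg (x - 1)]
  have h1 : 1 ≤ (1 - x + x ^ 2 / 2) * (1 + x + x ^ 2 / 2 + x ^ 3 / 6) := by
    nlinarith [pow_nonneg hx 3, pow_nonneg hx 4, pow_nonneg hx 5]
  have h4 : (Real.exp x)⁻¹ ≤ (1 + x + x ^ 2 / 2 + x ^ 3 / 6)⁻¹ := inv_anti₀ hp h3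
  have h5 : (1 + x + x ^ 2 / 2 + x ^ 3 / 6)⁻¹ ≤ 1 - x + x ^ 2 / 2 := by
    rw [inv_le_iff_one_le_mul₀ hp]; linarith [h1]
  calc Real.exp (-x) = (Real.exp x)⁻¹ := by rw [Real.exp_neg]
    _ ≤ _ := le_trans h4 h5

lemma base_tendsto {z : ℝ} (hz : 0 < z) (n : ℕ) :
    Tendsto (fun s : ℝ => s ^ n * Real.exp (-(z * s))) atTop (nhds 0) := by
  have h2 : Tendsto (fun s : ℝ => z * s) atTop atTop :=
    Tendsto.const_mul_atTop hz tendsto_id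
  have h3 := (Real.tendsto_pow_mul_exp_neg_atTop_nhds_zero n).comp h2
  have h4 := h3.const_mul ((1:ℝ) / z ^ n)
  rw [mul_zero] at h4
  convert h4 using 2 with s
  simp only [Function.comp]
  field_simp [mul_pow]
  ring

lemma poly_tendsto {z a0 a1 a2 a3 a4 : ℝ} (hz : 0 < z) :
    Tendsto (fun s : ℝ => -((a0 + a1 * s + a2 * s ^ 2 + a3 * s ^ 3 + a4 * s ^ 4)
      * Real.exp (-(z * s)))) atTop (nhds 0) := by
  have h0 := (base_tendsto hz 0).const_mul a0
  have h1 := (base_tendsto hz 1).const_mul a1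
  have h2 := (base_tendsto hz 2).const_mul a2
  have h3 := (base_tendsto hz 3).const_mul a3
  have h4 := (base_tendsto hz 4).const_mul a4
  have hs := ((((h0.add h1).add h2).add h3).add h4).neg
  norm_num at hs
  convert hs using 2 with s
  ring

lemma int_poly_exp {z : ℝ} (hz : 0 < z) :
    ∫ s in Set.Ioi (0:ℝ), (1 - s ^ 2 / 2 + s ^ 4 / 8) * Real.exp (-(z * s))
      = 1 / z - 1 / z ^ 3 + 3 / z ^ 5 := by
  set a4 : ℝ := 1 / (8 * z) with ha4
  set a3 : ℝ := 1 / (2 * z ^ 2) with ha3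
  set a2 : ℝ := -1 / (2 * z) + 3 / (2 * z ^ 3) with ha2
  set a1 : ℝ := -1 / z ^ 2 + 3 / z ^ 4 with ha1
  set a0 : ℝ := 1 / z - 1 / z ^ 3 + 3 / z ^ 5 with ha0
  have hderiv : ∀ s ∈ Set.Ici (0:ℝ),
      HasDerivAt (fun s : ℝ => -((a0 + a1 * s + a2 * s ^ 2 + a3 * s ^ 3 + a4 * s ^ 4)
        * Real.exp (-(z * s))))
      ((1 - s ^ 2 / 2 + s ^ 4 / 8) * Real.exp (-(z * s))) s := by
    intro s _
    have hP : HasDerivAt (fun s : ℝ => a0 + a1 * s + a2 * s ^ 2 + a3 * s ^ 3 + a4 * s ^ 4)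
        (a1 + 2 * a2 * s + 3 * a3 * s ^ 2 + 4 * a4 * s ^ 3) s := by
      have h := ((((hasDerivAt_const s a0).add ((hasDerivAt_id s).const_mul a1)).add
        ((hasDerivAt_pow 2 s).const_mul a2)).add ((hasDerivAt_pow 3 s).const_mul a3)).add
        ((hasDerivAt_pow 4 s).const_mul a4)
      refine h.congr_deriv ?_
      push_cast
      ring
    have hE : HasDerivAt (fun s : ℝ => Real.exp (-(z * s))) (-z * Real.exp (-(z * s))) s := by
      have h := (((hasDerivAt_id s).const_mul z).neg).exp
      simp only [id] at h
      refine h.congr_deriv ?_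
      simp only [Pi.neg_apply]
      ring
    have h := (hP.mul hE).neg
    refine h.congr_deriv ?_
    rw [ha0, ha1, ha2, ha3, ha4]
    field_simp
    ring
  have hnonneg : ∀ s ∈ Set.Ioi (0:ℝ), 0 ≤ (1 - s ^ 2 / 2 + s ^ 4 / 8) * Real.exp (-(z * s)) := by
    intro s _
    have h : 0 ≤ 1 - s ^ 2 / 2 + s ^ 4 / 8 := by nlinarith [sq_nonneg (s ^ 2 - 2)]
    positivity
  have htend := poly_tendsto (a0 := a0) (a1 := a1) (a2 := a2) (a3 := a3) (a4 := a4) hz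
  have h := integral_Ioi_of_hasDerivAt_of_nonneg' hderiv hnonneg htend
  rw [h]
  norm_num

lemma int_poly_on {z : ℝ} (hz : 0 < z) :
    IntegrableOn (fun s : ℝ => (1 - s ^ 2 / 2 + s ^ 4 / 8) * Real.exp (-(z * s)))
      (Set.Ioi (0:ℝ)) := by
  apply integrable_of_isBigO_exp_neg (half_pos hz) ?_ ?_
  · fun_prop
  · have h1 : Tendsto (fun s : ℝ => (1 - s ^ 2 / 2 + s ^ 4 / 8) * Real.exp (-(z * s))
        / Real.exp (-(z / 2) * s)) atTop (nhds 0) := by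
      have heq : ∀ s : ℝ, (1 - s ^ 2 / 2 + s ^ 4 / 8) * Real.exp (-(z * s)) / Real.exp (-(z / 2) * s)
          = (1 - s ^ 2 / 2 + s ^ 4 / 8) * Real.exp (-(z / 2 * s)) := by
        intro s
        rw [div_eq_iff (Real.exp_pos _).ne', mul_assoc, ← Real.exp_add]
        congr 2
        ring
      simp_rw [heq]
      have hb0 := (base_tendsto (half_pos hz) 0).const_mul (1:ℝ)
      have hb2 := (base_tendsto (half_pos hz) 2).const_mul (-(1:ℝ)/2)
      have hb4 := (base_tendsto (half_pos hz) 4).const_mul ((1:ℝ)/8)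
      have hs := (hb0.add hb2).add hb4
      norm_num at hs
      convert hs using 2 with s
      ring
    exact Asymptotics.isBigO_of_div_tendsto_nhds
      (Eventually.of_forall fun s hs => absurd hs (Real.exp_pos _).ne') 0 h1 |>.trans
      (Asymptotics.isBigO_refl _ _)

lemma GT_cubic {z : ℝ} (hz : 2 ≤ z) :
    GT z ≤ Real.exp (-z ^ 2 / 2) * ((z ^ 4 - z ^ 2 + 3) / z ^ 5) := by
  have hz0 : 0 < z := lt_of_lt_of_le two_pos hz
  have h0 : GT z = ∫ s in Set.Ioi (0:ℝ), Real.exp (-(s + z) ^ 2 / 2) := by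
    rw [GT_shift 0 z, zero_add]
  rw [h0]
  have hle : ∀ s ∈ Set.Ioi (0:ℝ), Real.exp (-(s + z) ^ 2 / 2)
      ≤ Real.exp (-z ^ 2 / 2) * ((1 - s ^ 2 / 2 + s ^ 4 / 8) * Real.exp (-(z * s))) := by
    intro s _
    have hsplit : Real.exp (-(s + z) ^ 2 / 2)
        = Real.exp (-z ^ 2 / 2) * (Real.exp (-(s ^ 2 / 2)) * Real.exp (-(z * s))) := by
      rw [← Real.exp_add, ← Real.exp_add]
      congr 1
      ring
    rw [hsplit]
    apply mul_le_mul_of_nonneg_left ?_ (Real.exp_pos _).le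
    apply mul_le_mul_of_nonneg_right ?_ (Real.exp_pos _).le
    calc Real.exp (-(s ^ 2 / 2)) ≤ 1 - s ^ 2 / 2 + (s ^ 2 / 2) ^ 2 / 2 :=
          exp_cube (by positivity)
      _ = 1 - s ^ 2 / 2 + s ^ 4 / 8 := by ring
  have hintshift : Integrable (fun s : ℝ => Real.exp (-(s + z) ^ 2 / 2)) := by
    have h2 := int_g.comp_add_right z
    simpa using h2
  calc ∫ s in Set.Ioi (0:ℝ), Real.exp (-(s + z) ^ 2 / 2)
      ≤ ∫ s in Set.Ioi (0:ℝ), Real.exp (-z ^ 2 / 2)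
          * ((1 - s ^ 2 / 2 + s ^ 4 / 8) * Real.exp (-(z * s))) :=
        setIntegral_mono_on hintshift.integrableOn
          ((int_poly_on hz0).const_mul _) measurableSet_Ioi hle
    _ = Real.exp (-z ^ 2 / 2) * (1 / z - 1 / z ^ 3 + 3 / z ^ 5) := by
        rw [integral_const_mul, int_poly_exp hz0]
    _ = Real.exp (-z ^ 2 / 2) * ((z ^ 4 - z ^ 2 + 3) / z ^ 5) := by
        congr 1
        field_simp

lemma h_sq {z : ℝ} (hz : 2 ≤ z) :
    z ^ 2 + 1/2 ≤ (Real.exp (-z ^ 2 / 2) / GT z) ^ 2 := by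
  have hz0 : 0 < z := lt_of_lt_of_le two_pos hz
  have hd : (0:ℝ) < z ^ 4 - z ^ 2 + 3 := by nlinarith [sq_nonneg (z ^ 2 - 1)]
  have hq : (0:ℝ) < (z ^ 4 - z ^ 2 + 3) / z ^ 5 := by positivity
  have hG := GT_pos z
  have hgz := Real.exp_pos (-z ^ 2 / 2)
  have h1 : z ^ 5 / (z ^ 4 - z ^ 2 + 3) ≤ Real.exp (-z ^ 2 / 2) / GT z := by
    rw [div_le_div_iff₀ hd hG]
    calc z ^ 5 * GT z ≤ z ^ 5 * (Real.exp (-z ^ 2 / 2) * ((z ^ 4 - z ^ 2 + 3) / z ^ 5)) :=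
          mul_le_mul_of_nonneg_left (GT_cubic hz) (by positivity)
      _ = Real.exp (-z ^ 2 / 2) * (z ^ 4 - z ^ 2 + 3) := by
          field_simp
  have h2 : (z ^ 5 / (z ^ 4 - z ^ 2 + 3)) ^ 2 ≤ (Real.exp (-z ^ 2 / 2) / GT z) ^ 2 := by
    apply pow_le_pow_left₀ (by positivity) h1
  refine le_trans ?_ h2
  rw [div_pow, le_div_iff₀ (by positivity)]
  calc (z ^ 2 + 1/2) * ((z ^ 4 - z ^ 2 + 3) ^ 2) ≤ z ^ 10 := by
        nlinarith [sq_nonneg z, sq_nonneg (z ^ 2 - 4),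
          mul_nonneg (mul_nonneg (sq_nonneg z) (sq_nonneg z)) (sq_nonneg (z ^ 2 - 4)),
          sq_nonneg (z ^ 4 - 4 * z ^ 2)]
    _ = (z ^ 5) ^ 2 := by ring

lemma condMean_eq (z : ℝ) : condMean z = AA z / GT z := by
  rw [condMean, AA]
  have h : (∫ t in Set.Ioi z, Real.exp (-t ^ 2 / 2)) = GT z := rfl
  rw [h, sub_div, mul_div_assoc, div_self (GT_pos z).ne', mul_one]

lemma condMean_pos (z : ℝ) : 0 < condMean z := by
  rw [condMean_eq]; exact div_pos (AA_pos z) (GT_pos z)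

lemma z_add_condMean (z : ℝ) : z + condMean z = Real.exp (-z ^ 2 / 2) / GT z := by
  rw [condMean]
  have h : (∫ t in Set.Ioi z, Real.exp (-t ^ 2 / 2)) = GT z := rfl
  rw [h]; ring

lemma tail_eq (z s : ℝ) :
    (∫ t in Set.Ioi s, condDens z t) = GT (z + s) / GT z := by
  have h : ∀ t : ℝ, condDens z t = Real.exp (-(t + z) ^ 2 / 2) / GT z := fun t => rfl
  simp_rw [h]
  rw [integral_div, GT_shift s z, add_comm s z]

set_option maxHeartbeats 1000000 in
theorem condDens_tail_exponential_bound :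
    ∃ C > (0 : ℝ), ∃ c > (0 : ℝ), ∀ z : ℝ, ∀ k : ℕ, 1 ≤ k →
      (∫ t in Set.Ioi ((k : ℝ) * condMean z), condDens z t) ≤ C * Real.exp (-c * k) := by
  set δ : ℝ := AA 2 / TT with hδdef
  have hδ : 0 < δ := div_pos (AA_pos 2) TT_pos
  set c : ℝ := min (δ ^ 2 / 2) (1/4) with hcdef
  have hc : 0 < c := lt_min (by positivity) (by norm_num)
  set C : ℝ := TT / GT 2 * Real.exp (δ ^ 2 / 2) + 1 with hCdef
  have hC1 : (1:ℝ) ≤ C := by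
    have h : 0 < TT / GT 2 * Real.exp (δ ^ 2 / 2) :=
      mul_pos (div_pos TT_pos (GT_pos 2)) (Real.exp_pos _)
    rw [hCdef]; linarith
  have hC : 0 < C := lt_of_lt_of_le one_pos hC1
  have hcle1 : c ≤ δ ^ 2 / 2 := by rw [hcdef]; exact min_le_left _ _
  have hcle2 : c ≤ 1/4 := by rw [hcdef]; exact min_le_right _ _
  clear_value δ c C
  refine ⟨C, hC, c, hc, fun z k hk => ?_⟩
  have hk1 : (1:ℝ) ≤ (k:ℝ) := by exact_mod_cast hk
  set m : ℝ := condMean z with hmdef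
  have hm : 0 < m := condMean_pos z
  have hLHS := tail_eq z ((k:ℝ) * m)
  rw [hLHS]
  have hkm : m ≤ (k:ℝ) * m := le_mul_of_one_le_left hm.le hk1
  have hmz : m = condMean z := hmdef
  clear_value m
  rcases le_or_gt z 2 with hz | hz
  · -- case z ≤ 2
    have hmδ : δ ≤ m := by
      rw [hδdef, hmdef, condMean_eq]
      exact div_le_div₀ (AA_pos z).le (AA_mono hz) (GT_pos z) (GT_le_TT z)
    have hsum : 0 < z + m := by
      rw [hmdef, z_add_condMean]; exact div_pos (Real.exp_pos _) (GT_pos z)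
    have hzm : ((k:ℝ) - 1) * δ ≤ z + (k:ℝ) * m := by
      have h2 : ((k:ℝ) - 1) * δ ≤ ((k:ℝ) - 1) * m :=
        mul_le_mul_of_nonneg_left hmδ (by linarith)
      linarith [h2, hsum, hkm]
    have hδ0 : 0 ≤ ((k:ℝ) - 1) * δ := mul_nonneg (by linarith) hδ.le
    have hsq : ((k:ℝ) - 1) ≤ ((k:ℝ) - 1) ^ 2 := by
      rcases Nat.lt_or_ge k 2 with h | h
      · interval_cases k
        · norm_num
      · have : (2:ℝ) ≤ (k:ℝ) := by exact_mod_cast h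
        nlinarith
    calc GT (z + (k:ℝ) * m) / GT z ≤ GT (((k:ℝ) - 1) * δ) / GT 2 :=
          div_le_div₀ (GT_pos _).le (GT_anti hzm) (GT_pos 2) (GT_anti hz)
      _ ≤ TT * Real.exp (-(((k:ℝ) - 1) * δ) ^ 2 / 2) / GT 2 :=
          div_le_div₀ (mul_nonneg TT_pos.le (Real.exp_pos _).le) (GT_decay hδ0) (GT_pos 2) le_rfl
      _ ≤ TT * (Real.exp (δ ^ 2 / 2) * Real.exp (-c * k)) / GT 2 := by
          refine div_le_div₀ (mul_nonneg TT_pos.le (mul_pos (Real.exp_pos _) (Real.exp_pos _)).le) ?_ (GT_pos 2) le_rfl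
          apply mul_le_mul_of_nonneg_left ?_ TT_pos.le
          rw [← Real.exp_add]
          apply Real.exp_le_exp.mpr
          have hck : c * (k:ℝ) ≤ δ ^ 2 / 2 * (k:ℝ) :=
            mul_le_mul_of_nonneg_right hcle1 (by linarith)
          have hkey : ((k:ℝ) - 1) * δ ^ 2 ≤ (((k:ℝ) - 1) * δ) ^ 2 := by
            calc ((k:ℝ) - 1) * δ ^ 2 ≤ ((k:ℝ) - 1) ^ 2 * δ ^ 2 :=
                  mul_le_mul_of_nonneg_right hsq (sq_nonneg δ)
              _ = (((k:ℝ) - 1) * δ) ^ 2 := by ring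
          nlinarith [hck, hkey, sq_nonneg δ]
      _ = TT / GT 2 * Real.exp (δ ^ 2 / 2) * Real.exp (-c * k) := by ring
      _ ≤ C * Real.exp (-c * k) := by
          apply mul_le_mul_of_nonneg_right ?_ (Real.exp_pos _).le
          rw [hCdef]; linarith
  · -- case 2 < z
    have hz2 : (2:ℝ) ≤ z := hz.le
    have hz0 : 0 < z := by linarith
    have hsum : z + m = Real.exp (-z ^ 2 / 2) / GT z := by
      rw [hmdef, z_add_condMean]
    have hsq : z ^ 2 + 1/2 ≤ (z + m) ^ 2 := by rw [hsum]; exact h_sq hz2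
    have hzkm : 0 < z + (k:ℝ) * m := by linarith [hkm, hm, hz0]
    have hGz : GT z = Real.exp (-z ^ 2 / 2) / (z + m) := by
      have h : 0 < z + m := by linarith
      rw [eq_div_iff h.ne']
      rw [eq_div_iff (GT_pos z).ne'] at hsum
      rw [mul_comm]
      exact hsum
    have step1 : GT (z + (k:ℝ) * m) ≤ Real.exp (-(z + (k:ℝ) * m) ^ 2 / 2) / (z + (k:ℝ) * m) := by
      rw [le_div_iff₀ hzkm, mul_comm]
      exact mills hzkm
    have hratio : GT (z + (k:ℝ) * m) / GT z
        ≤ Real.exp (-(z + (k:ℝ) * m) ^ 2 / 2) / Real.exp (-z ^ 2 / 2) := by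
      have hkey2 : GT (z + (k:ℝ) * m) * (z + m) ≤ Real.exp (-(z + (k:ℝ) * m) ^ 2 / 2) := by
        calc GT (z + (k:ℝ) * m) * (z + m) ≤ GT (z + (k:ℝ) * m) * (z + (k:ℝ) * m) := by
              apply mul_le_mul_of_nonneg_left (by linarith) (GT_pos _).le
          _ = (z + (k:ℝ) * m) * GT (z + (k:ℝ) * m) := by ring
          _ ≤ Real.exp (-(z + (k:ℝ) * m) ^ 2 / 2) := mills hzkm
      rw [hGz, div_div_eq_mul_div]
      exact div_le_div₀ (Real.exp_pos _).le hkey2 (Real.exp_pos _) le_rfl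
    have hexp : Real.exp (-(z + (k:ℝ) * m) ^ 2 / 2) / Real.exp (-z ^ 2 / 2)
        ≤ Real.exp (-c * k) := by
      rw [← Real.exp_sub]
      apply Real.exp_le_exp.mpr
      have hksq : (k:ℝ) ≤ (k:ℝ) ^ 2 := by
        calc (k:ℝ) = (k:ℝ) * 1 := by ring
          _ ≤ (k:ℝ) * (k:ℝ) := mul_le_mul_of_nonneg_left hk1 (by linarith)
          _ = (k:ℝ) ^ 2 := by ring
      have hkey : (k:ℝ) * ((z + m) ^ 2 - z ^ 2) ≤ (z + (k:ℝ) * m) ^ 2 - z ^ 2 := by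
        have h1 : (k:ℝ) * m ^ 2 ≤ ((k:ℝ) * m) ^ 2 := by
          calc (k:ℝ) * m ^ 2 ≤ (k:ℝ) ^ 2 * m ^ 2 :=
                mul_le_mul_of_nonneg_right hksq (sq_nonneg m)
            _ = ((k:ℝ) * m) ^ 2 := by ring
        nlinarith [h1]
      have e1 : c * (k:ℝ) ≤ 1/4 * (k:ℝ) := mul_le_mul_of_nonneg_right hcle2 (by linarith)
      have e2 : (k:ℝ) * (1/2) ≤ (k:ℝ) * ((z + m) ^ 2 - z ^ 2) :=
        mul_le_mul_of_nonneg_left (by linarith) (by linarith)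
      nlinarith [hkey, e1, e2, hsq]
    calc GT (z + (k:ℝ) * m) / GT z
        ≤ Real.exp (-(z + (k:ℝ) * m) ^ 2 / 2) / Real.exp (-z ^ 2 / 2) := hratio
      _ ≤ Real.exp (-c * k) := hexp
      _ ≤ C * Real.exp (-c * k) := le_mul_of_one_le_left (Real.exp_pos _).le hC1
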